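/- arXiv:2202.02474 — 4 statements merged into one kernel-verified Lean document; each statement's English description precedes it below -/
import Mathlib

section
/- Let H be a separable Hilbert space over ℝ, let C be a compact, positive, self-adjoint bounded linear operator on H, let β ∈ (0, 1/2], let g ∈ H, and set r₀ = C^β g. Then for every η > 0, ‖(C + ηI)⁻¹ C r₀ − r₀‖ ≤ η^β · ‖g‖. -/
open scoped RealInnerProductSpace

private lemma key_ineq {ν η β : ℝ} (hν : 0 ≤ ν) (hη : 0 < η) (hβ0 : 0 < β) (hβ1 : β ≤ 1) :
    η * ν ^ β ≤ η ^ β * (ν + η) := by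
  have h1 : η ^ (1 - β) * ν ^ β ≤ (1 - β) * η + β * ν :=
    Real.geom_mean_le_arith_mean2_weighted (by linarith) hβ0.le hη.le hν (by ring)
  have h2 : η ^ β * η ^ (1 - β) = η := by
    rw [← Real.rpow_add hη]; norm_num
  have h3 : (1 - β) * η + β * ν ≤ ν + η := by nlinarith
  calc η * ν ^ β = η ^ β * (η ^ (1 - β) * ν ^ β) := by rw [← mul_assoc, h2]
    _ ≤ η ^ β * (ν + η) := by
        have h4 := Real.rpow_nonneg hη.le β
        nlinarith

/-- Let `H` be a separable real Hilbert space, `C` a compact, positive,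
self-adjoint bounded operator on `H` with orthonormal eigensystem `(ν k, e k)` (where `e` is a
Hilbert basis of `H`), let `β ∈ (0, 1/2]`, `g ∈ H`, and let `r₀ = C^β g`, where `C^β` is the
operator `Cβ` with the same eigenvectors and eigenvalues `ν k ^ β`.  Then for every `η > 0`,
`‖(C + ηI)⁻¹ C r₀ − r₀‖ ≤ η^β ‖g‖`. -/
theorem stmt0
    {H : Type*} [NormedAddCommGroup H] [InnerProductSpace ℝ H] [CompleteSpace H]
    [TopologicalSpace.SeparableSpace H]
    (C : H →L[ℝ] H) (hC_compact : IsCompactOperator C) (hC_pos : C.IsPositive)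
    {ι : Type*} (e : HilbertBasis ι ℝ H) (ν : ι → ℝ) (hν : ∀ k, 0 ≤ ν k)
    (heig : ∀ k, C (e k) = ν k • e k)
    (β : ℝ) (hβ : β ∈ Set.Ioc (0 : ℝ) (1 / 2))
    (Cβ : H →L[ℝ] H) (hCβ : ∀ k, Cβ (e k) = (ν k ^ β) • e k)
    (g r₀ : H) (hr₀ : r₀ = Cβ g)
    (η : ℝ) (hη : 0 < η) :
    ‖Ring.inverse (C + η • (1 : H →L[ℝ] H)) (C r₀) - r₀‖ ≤ η ^ β * ‖g‖ := by
  classical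
  obtain ⟨hβ0, hβhalf⟩ := hβ
  have hβ1 : β ≤ 1 := hβhalf.trans (by norm_num)
  set A : H →L[ℝ] H := C + η • (1 : H →L[ℝ] H) with hAdef
  have hA_apply : ∀ y : H, A y = C y + η • y := fun y => rfl
  have hCsym : (C : H →ₗ[ℝ] H).IsSymmetric :=
    ContinuousLinearMap.isSelfAdjoint_iff_isSymmetric.mp hC_pos.isSelfAdjoint
  have hCs : ∀ a b : H, ⟪C a, b⟫ = ⟪a, C b⟫ := fun a b => hCsym a b
  -- A is invertible (Lax–Milgram)
  have hcoer : IsCoercive ((innerSL ℝ).comp A) := by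
    refine ⟨η, hη, fun u => ?_⟩
    have h1 : 0 ≤ ⟪C u, u⟫ := by
      have := hC_pos.inner_nonneg_left u
      simpa using this
    have h2 : ((innerSL ℝ).comp A) u u = ⟪C u, u⟫ + η * ⟪u, u⟫ := by
      simp [hA_apply, inner_add_left, real_inner_smul_left]
    rw [h2, real_inner_self_eq_norm_mul_norm]
    nlinarith [norm_nonneg u]
  have hAeq : A = (hcoer.continuousLinearEquivOfBilin : H →L[ℝ] H) := by
    ext v
    refine ext_inner_right ℝ fun w => ?_
    exact (hcoer.continuousLinearEquivOfBilin_apply v w).symm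
  have hAunit : IsUnit A := by
    rw [hAeq]
    exact ⟨(ContinuousLinearEquiv.unitsEquiv ℝ H).symm hcoer.continuousLinearEquivOfBilin, rfl⟩
  set x : H := Ring.inverse A r₀ with hx
  have hinvA : ∀ y : H, Ring.inverse A (A y) = y := fun y => by
    have h := Ring.inverse_mul_cancel A hAunit
    calc Ring.inverse A (A y) = (Ring.inverse A * A) y := rfl
      _ = y := by rw [h]; rfl
  have hAx : A x = r₀ := by
    have h := Ring.mul_inverse_cancel A hAunit
    calc A x = (A * Ring.inverse A) r₀ := rfl
      _ = r₀ := by rw [h]; rfl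
  -- reduce the goal expression
  have hexpr : Ring.inverse A (C r₀) - r₀ = -(η • x) := by
    have hC_r₀ : C r₀ = A r₀ - η • r₀ := by rw [hA_apply]; abel
    rw [hC_r₀, map_sub, map_smul, hinvA, ← hx]
    abel
  rw [hexpr, norm_neg]
  -- coefficients
  have horth : ∀ i j, ⟪e i, e j⟫ = if i = j then (1 : ℝ) else 0 :=
    orthonormal_iff_ite.mp e.orthonormal
  have hr₀k : ∀ k, ⟪e k, r₀⟫ = ν k ^ β * ⟪e k, g⟫ := by
    intro k
    have h1 : HasSum (fun i => e.repr g i • e i) g := e.hasSum_repr g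
    have h2 : HasSum (fun i => (e.repr g i * ν i ^ β) • e i) (Cβ g) := by
      have h := h1.mapL Cβ
      refine h.congr_fun fun i => ?_
      simp only [ContinuousLinearMap.map_smul, hCβ, smul_smul]
    have h3 : HasSum (fun i => ⟪e k, (e.repr g i * ν i ^ β) • e i⟫) ⟪e k, Cβ g⟫ :=
      h2.mapL (innerSL ℝ (e k))
    have h4 : (fun i => ⟪e k, (e.repr g i * ν i ^ β) • e i⟫) =
        fun i => if i = k then ν k ^ β * ⟪e k, g⟫ else 0 := by
      funext i
      rw [real_inner_smul_right, horth k i]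
      rcases eq_or_ne i k with rfl | hik
      · rw [if_pos rfl, if_pos rfl, mul_one, e.repr_apply_apply]
        ring
      · rw [if_neg (Ne.symm hik), if_neg hik, mul_zero]
    rw [h4] at h3
    have h5 : HasSum (fun i => if i = k then ν k ^ β * ⟪e k, g⟫ else 0) (ν k ^ β * ⟪e k, g⟫) :=
      hasSum_ite_eq k _
    rw [hr₀]
    exact h3.unique h5
  have hck : ∀ k, (ν k + η) * ⟪e k, x⟫ = ν k ^ β * ⟪e k, g⟫ := by
    intro k
    have h1 : ⟪e k, A x⟫ = (ν k + η) * ⟪e k, x⟫ := by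
      rw [hA_apply, inner_add_right, real_inner_smul_right, ← hCs, heig,
        real_inner_smul_left]
      ring
    rw [← hr₀k k, ← hAx, h1]
  -- pointwise bound
  have hkey : ∀ k, (η * ⟪e k, x⟫) ^ 2 ≤ (η ^ β) ^ 2 * ⟪e k, g⟫ ^ 2 := by
    intro k
    have hpos : 0 < ν k + η := by have := hν k; linarith
    have hcval : ⟪e k, x⟫ = ν k ^ β * ⟪e k, g⟫ / (ν k + η) := by
      field_simp
      linarith [hck k]
    have ht0 : 0 ≤ η * ν k ^ β / (ν k + η) :=
      div_nonneg (mul_nonneg hη.le (Real.rpow_nonneg (hν k) β)) hpos.le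
    have ht1 : η * ν k ^ β / (ν k + η) ≤ η ^ β :=
      (div_le_iff₀ hpos).mpr (key_ineq (hν k) hη hβ0 hβ1)
    have heq : η * ⟪e k, x⟫ = (η * ν k ^ β / (ν k + η)) * ⟪e k, g⟫ := by
      rw [hcval]; ring
    rw [heq, mul_pow]
    have h2 : (η * ν k ^ β / (ν k + η)) ^ 2 ≤ (η ^ β) ^ 2 := pow_le_pow_left₀ ht0 ht1 2
    exact mul_le_mul_of_nonneg_right h2 (sq_nonneg _)
  -- sum up
  have hxsum : HasSum (fun k => (η * ⟪e k, x⟫) ^ 2) (‖η • x‖ ^ 2) := by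
    have h := e.hasSum_inner_mul_inner (η • x) (η • x)
    have heq : (fun i => ⟪η • x, e i⟫ * ⟪e i, η • x⟫) = fun i => (η * ⟪e i, x⟫) ^ 2 := by
      funext i
      simp only [real_inner_smul_left, real_inner_smul_right, real_inner_comm x (e i)]
      ring
    rw [heq, real_inner_self_eq_norm_sq] at h
    exact h
  have hgsum : HasSum (fun k => ⟪e k, g⟫ ^ 2) (‖g‖ ^ 2) := by
    have h := e.hasSum_inner_mul_inner g g
    have heq : (fun i => ⟪g, e i⟫ * ⟪e i, g⟫) = fun i => ⟪e i, g⟫ ^ 2 := by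
      funext i
      rw [real_inner_comm g (e i)]
      ring
    rw [heq, real_inner_self_eq_norm_sq] at h
    exact h
  have hle : ‖η • x‖ ^ 2 ≤ (η ^ β) ^ 2 * ‖g‖ ^ 2 :=
    hasSum_le hkey hxsum (hgsum.mul_left ((η ^ β) ^ 2))
  have hfinal : ‖η • x‖ ^ 2 ≤ (η ^ β * ‖g‖) ^ 2 := by
    rw [mul_pow]; exact hle
  exact le_of_pow_le_pow_left₀ two_ne_zero
    (mul_nonneg (Real.rpow_nonneg hη.le β) (norm_nonneg g)) hfinal
end

section
/- Let H_X and H_Z be separable Hilbert spaces over ℝ, let C be a compact, positive, self-adjoint bounded linear operator on H_X, let β ∈ (0, 1/2], let Γ : H_Z → H_X be a bounded linear operator, and set E = C^β ∘ Γ. Then for every λ > 0, ‖(C + λI)⁻¹ ∘ C ∘ E − E‖ ≤ λ^β · ‖Γ‖, where ‖·‖ denotes the operator norm. -/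
open scoped InnerProductSpace

/-- Norm bound for a diagonal operator w.r.t. a Hilbert basis. -/
lemma diag_opNorm_le {H : Type*} [NormedAddCommGroup H] [InnerProductSpace ℝ H]
    [CompleteSpace H] {ι : Type*} (e : HilbertBasis ι ℝ H) (D : H →L[ℝ] H) (d : ι → ℝ)
    (hD : ∀ k, D (e k) = d k • e k) {M : ℝ} (hM : 0 ≤ M) (hd : ∀ k, |d k| ≤ M) :
    ‖D‖ ≤ M := by
  classical
  refine D.opNorm_le_bound hM (fun x => ?_)
  have hsx : HasSum (fun j => e.repr x j • D (e j)) (D x) := by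
    have := (e.hasSum_repr x).mapL D
    simpa only [map_smul] using this
  have hinner : ∀ i, ⟪(e i : H), D x⟫_ℝ = d i * ⟪(e i : H), x⟫_ℝ := by
    intro i
    have h2 : HasSum (fun j => ⟪(e i : H), e.repr x j • D (e j)⟫_ℝ) ⟪(e i : H), D x⟫_ℝ :=
      hsx.mapL (innerSL ℝ (e i))
    have h3 : (fun j => ⟪(e i : H), e.repr x j • D (e j)⟫_ℝ)
        = fun j => if j = i then d i * ⟪(e i : H), x⟫_ℝ else 0 := by
      funext j
      rw [hD j, real_inner_smul_right, real_inner_smul_right,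
        orthonormal_iff_ite.mp e.orthonormal i j]
      by_cases hij : j = i
      · subst hij
        rw [if_pos rfl, if_pos rfl, ← e.repr_apply_apply]
        ring
      · rw [if_neg hij, if_neg (Ne.symm hij)]
        ring
    rw [h3] at h2
    exact h2.unique (hasSum_ite_eq i _)
  have hDx : HasSum (fun i => (d i * ⟪(e i : H), x⟫_ℝ) ^ 2) (‖D x‖ ^ 2) := by
    have := e.hasSum_inner_mul_inner (D x) (D x)
    rw [real_inner_self_eq_norm_sq] at this
    convert this using 2
    · rfl
    rename_i i
    rw [real_inner_comm ((e i : H)) (D x), hinner i]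
    ring
  have hx : HasSum (fun i => (⟪(e i : H), x⟫_ℝ) ^ 2) (‖x‖ ^ 2) := by
    have := e.hasSum_inner_mul_inner x x
    rw [real_inner_self_eq_norm_sq] at this
    convert this using 2
    · rfl
    rename_i i
    rw [real_inner_comm ((e i : H)) x]
    ring
  have hle : ‖D x‖ ^ 2 ≤ (M * ‖x‖) ^ 2 := by
    rw [mul_pow]
    refine hasSum_le (fun i => ?_) hDx (hx.mul_left (M ^ 2))
    have h1 : (d i * ⟪(e i : H), x⟫_ℝ) ^ 2 = d i ^ 2 * ⟪(e i : H), x⟫_ℝ ^ 2 := by ring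
    rw [h1]
    exact mul_le_mul_of_nonneg_right (sq_le_sq' (neg_le_of_abs_le (hd i))
      (le_of_abs_le (hd i))) (sq_nonneg _)
  have := Real.sqrt_le_sqrt hle
  rwa [Real.sqrt_sq (norm_nonneg _), Real.sqrt_sq (mul_nonneg hM (norm_nonneg _))] at this

/-- Let `H_X`, `H_Z` be separable real Hilbert spaces, `C` a compact, positive,
self-adjoint bounded operator on `H_X` with orthonormal eigensystem `(ν k, e k)` (`e` a Hilbert
basis), `β ∈ (0, 1/2]`, `Γ : H_Z →L H_X` bounded linear, and `E = C^β ∘ Γ`, where `C^β = Cβ` is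
the operator with the same eigenvectors and eigenvalues `ν k ^ β`.  Then for every `λ > 0`,
`‖(C + λI)⁻¹ ∘ C ∘ E − E‖ ≤ λ^β ‖Γ‖` in operator norm. -/
theorem stmt2
    {HX : Type*} [NormedAddCommGroup HX] [InnerProductSpace ℝ HX] [CompleteSpace HX]
    [TopologicalSpace.SeparableSpace HX]
    {HZ : Type*} [NormedAddCommGroup HZ] [InnerProductSpace ℝ HZ] [CompleteSpace HZ]
    [TopologicalSpace.SeparableSpace HZ]
    (C : HX →L[ℝ] HX) (hC_compact : IsCompactOperator C) (hC_pos : C.IsPositive)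
    {ι : Type*} (e : HilbertBasis ι ℝ HX) (ν : ι → ℝ) (hν : ∀ k, 0 ≤ ν k)
    (heig : ∀ k, C (e k) = ν k • e k)
    (β : ℝ) (hβ : β ∈ Set.Ioc (0 : ℝ) (1 / 2))
    (Cβ : HX →L[ℝ] HX) (hCβ : ∀ k, Cβ (e k) = (ν k ^ β) • e k)
    (Γ : HZ →L[ℝ] HX) (E : HZ →L[ℝ] HX) (hE : E = Cβ ∘L Γ)
    (l : ℝ) (hl : 0 < l) :
    ‖Ring.inverse (C + l • (1 : HX →L[ℝ] HX)) ∘L (C ∘L E) - E‖ ≤ l ^ β * ‖Γ‖ := by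
  obtain ⟨hβ0, hβhalf⟩ := hβ
  set A := C + l • (1 : HX →L[ℝ] HX) with hA
  -- coercivity of the bilinear form of `A`
  have hcoer : IsCoercive ((innerSL ℝ).comp A) := by
    refine ⟨l, hl, fun u => ?_⟩
    have h1 : ((innerSL ℝ).comp A) u u = ⟪C u, u⟫_ℝ + l * (‖u‖ * ‖u‖) := by
      simp [hA, inner_add_left, real_inner_smul_left, real_inner_self_eq_norm_mul_norm, sq]
    have h2 : 0 ≤ ⟪C u, u⟫_ℝ := by simpa using hC_pos.inner_nonneg_left u
    rw [h1]
    nlinarith [norm_nonneg u]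
  -- `A` is a unit
  have hbij : ∀ v, A v = hcoer.continuousLinearEquivOfBilin v := fun v =>
    hcoer.unique_continuousLinearEquivOfBilin (fun w => rfl)
  have hA_unit : IsUnit A := by
    rw [ContinuousLinearMap.isUnit_iff_bijective]
    have hfun : (A : HX → HX) = hcoer.continuousLinearEquivOfBilin := funext hbij
    rw [hfun]
    exact hcoer.continuousLinearEquivOfBilin.bijective
  have hinvA : ∀ x, Ring.inverse A (A x) = x := by
    intro x
    have h := ContinuousLinearMap.ext_iff.mp (Ring.inverse_mul_cancel A hA_unit) x
    rwa [ContinuousLinearMap.mul_apply, ContinuousLinearMap.one_apply] at h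
  have hAe : ∀ k, A (e k) = (ν k + l) • e k := by
    intro k
    simp [hA, heig k, add_smul]
  have hinv_e : ∀ k, Ring.inverse A (e k) = (ν k + l)⁻¹ • e k := by
    intro k
    have hpos : (0:ℝ) < ν k + l := add_pos_of_nonneg_of_pos (hν k) hl
    have h : A ((ν k + l)⁻¹ • e k) = e k := by
      rw [map_smul, hAe k, smul_smul, inv_mul_cancel₀ hpos.ne', one_smul]
    calc Ring.inverse A (e k) = Ring.inverse A (A ((ν k + l)⁻¹ • e k)) := by rw [h]
    _ = (ν k + l)⁻¹ • e k := hinvA _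
  set D := Ring.inverse A ∘L Cβ with hDdef
  have hD : ∀ k, D (e k) = (ν k ^ β * (ν k + l)⁻¹) • e k := by
    intro k
    rw [hDdef, ContinuousLinearMap.comp_apply, hCβ k, map_smul, hinv_e k, smul_smul]
  -- norm bound on the diagonal operator
  have hDnorm : ‖D‖ ≤ l ^ (β - 1) := by
    refine diag_opNorm_le e D _ hD (Real.rpow_nonneg hl.le _) (fun k => ?_)
    have hpos : (0:ℝ) < ν k + l := add_pos_of_nonneg_of_pos (hν k) hl
    have hnn : 0 ≤ ν k ^ β * (ν k + l)⁻¹ :=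
      mul_nonneg (Real.rpow_nonneg (hν k) _) (inv_nonneg.mpr hpos.le)
    rw [abs_of_nonneg hnn]
    have h1 : ν k ^ β ≤ (ν k + l) ^ β :=
      Real.rpow_le_rpow (hν k) (le_add_of_nonneg_right hl.le) hβ0.le
    have h2 : ν k ^ β * (ν k + l)⁻¹ ≤ (ν k + l) ^ (β - 1) := by
      rw [Real.rpow_sub_one hpos.ne' β, div_eq_mul_inv]
      exact mul_le_mul_of_nonneg_right h1 (inv_nonneg.mpr hpos.le)
    have h3 : (ν k + l) ^ (β - 1) ≤ l ^ (β - 1) :=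
      Real.rpow_le_rpow_of_nonpos hl (le_add_of_nonneg_left (hν k)) (by linarith)
    linarith
  -- algebraic identity
  have hkey : Ring.inverse A ∘L (C ∘L E) - E = -(l • (D ∘L Γ)) := by
    ext z
    have h1 : C (E z) = A (E z) - l • E z := by
      simp [hA]
    have h2 : Ring.inverse A (E z) = D (Γ z) := by
      rw [hE, hDdef]
      rfl
    simp only [ContinuousLinearMap.comp_apply, ContinuousLinearMap.sub_apply,
      ContinuousLinearMap.neg_apply, ContinuousLinearMap.smul_apply]
    rw [h1, map_sub, hinvA (E z), map_smul, h2]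
    abel
  rw [hkey, norm_neg, norm_smul l (D.comp Γ), Real.norm_of_nonneg hl.le]
  have hc : ‖D ∘L Γ‖ ≤ l ^ (β - 1) * ‖Γ‖ :=
    le_trans (ContinuousLinearMap.opNorm_comp_le D Γ)
      (mul_le_mul_of_nonneg_right hDnorm (norm_nonneg Γ))
  have hll : l * l ^ (β - 1) = l ^ β := by
    calc l * l ^ (β - 1) = l ^ (1:ℝ) * l ^ (β - 1) := by rw [Real.rpow_one]
    _ = l ^ (1 + (β - 1)) := (Real.rpow_add hl _ _).symm
    _ = l ^ β := by ring_nf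
  calc l * ‖D ∘L Γ‖ ≤ l * (l ^ (β - 1) * ‖Γ‖) := mul_le_mul_of_nonneg_left hc hl.le
  _ = l ^ β * ‖Γ‖ := by rw [← mul_assoc, hll]
end

section
/- Let H_X and H_Z be separable Hilbert spaces over ℝ. Let C be a compact, positive, self-adjoint bounded linear operator on H_X; let β₂ ∈ (0, 1/2], ζ₂ < ∞, and let Γ : H_Z → H_X be a bounded linear operator with ‖Γ‖ ≤ ζ₂; set E = C^{β₂} ∘ Γ and B = C ∘ E. Let Ĉ be a positive, self-adjoint bounded linear operator on H_X and B̂ : H_Z → H_X a bounded linear operator, and suppose ‖Ĉ − C‖ ≤ ε₁ and ‖B̂ − B‖ ≤ ε₂. Then for every λ > 0, the estimator Ê_λ = (Ĉ + λI)⁻¹ ∘ B̂ satisfies ‖Ê_λ − E‖ ≤ (1/λ)(ε₁‖E‖ + ε₂) + λ^{β₂} ζ₂, where all norms on operators are operator norms. -/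
open ContinuousLinearMap RealInnerProductSpace

section Aux
variable {H : Type*} [NormedAddCommGroup H] [InnerProductSpace ℝ H] [CompleteSpace H]

lemma coercive_isUnit (A : H →L[ℝ] H) {l : ℝ} (hl : 0 < l)
    (hA : ∀ x, l * ‖x‖ ^ 2 ≤ ⟪A x, x⟫) : IsUnit A := by
  apply isUnit_of_forall_le_norm_inner_map A (c := l.toNNReal) (by simpa using hl)
  intro x
  calc ‖x‖ ^ 2 * l.toNNReal = l * ‖x‖ ^ 2 := by
        rw [Real.coe_toNNReal _ hl.le]; ring
  _ ≤ ⟪A x, x⟫ := hA x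
  _ ≤ ‖(inner ℝ (A x) x : ℝ)‖ := le_abs_self _

lemma coercive_inv_bound (A : H →L[ℝ] H) {l : ℝ} (hl : 0 < l)
    (hA : ∀ x, l * ‖x‖ ^ 2 ≤ ⟪A x, x⟫) (hu : IsUnit A) :
    ‖Ring.inverse A‖ ≤ 1 / l := by
  apply opNorm_le_bound _ (by positivity)
  intro y
  set x := Ring.inverse A y with hx
  have hAx : A x = y := by
    have h := Ring.mul_inverse_cancel A hu
    calc A x = (A * Ring.inverse A) y := rfl
    _ = y := by rw [h, one_def, id_apply]
  have h1 : l * ‖x‖ ^ 2 ≤ ‖y‖ * ‖x‖ := by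
    calc l * ‖x‖ ^ 2 ≤ ⟪A x, x⟫ := hA x
    _ ≤ ‖A x‖ * ‖x‖ := real_inner_le_norm _ _
    _ = ‖y‖ * ‖x‖ := by rw [hAx]
  rcases eq_or_lt_of_le (norm_nonneg x) with h0 | h0
  · rw [← h0]; positivity
  · rw [div_mul_eq_mul_div, le_div_iff₀ hl]
    nlinarith

set_option linter.unusedSectionVars false

lemma diag_repr {ι : Type*} (e : HilbertBasis ι ℝ H) (T : H →L[ℝ] H) (μ : ι → ℝ)
    (hT : ∀ k, T (e k) = μ k • e k) (x : H) (i : ι) :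
    e.repr (T x) i = μ i * e.repr x i := by
  classical
  rw [e.repr_apply_apply (v := T x)]
  have h1 : HasSum (fun k => e.repr x k • e k) x := e.hasSum_repr x
  have h2 : HasSum (fun k => (μ k * e.repr x k) • e k) (T x) := by
    have := h1.mapL T
    convert this using 2 with k
    rw [map_smul, hT k, smul_smul, mul_comm]
  have h3 : HasSum (fun k => (μ k * e.repr x k) * ⟪e i, e k⟫) ⟪e i, T x⟫ := by
    have := h2.mapL (innerSL ℝ (e i))
    convert this using 2 with k
    · rfl
    · rw [innerSL_apply_apply, real_inner_smul_right]
    · rfl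
  have h4 : HasSum (fun k => (μ k * e.repr x k) * ⟪e i, e k⟫) (μ i * e.repr x i) := by
    have horth := e.orthonormal
    have : (fun k => (μ k * e.repr x k) * ⟪e i, e k⟫)
        = fun k => if k = i then μ i * e.repr x i else 0 := by
      funext k
      rcases eq_or_ne k i with rfl | hk
      · simp [orthonormal_iff_ite.mp horth, horth.1 k]
      · simp [orthonormal_iff_ite.mp horth, (Ne.symm hk), hk]
    rw [this]
    exact hasSum_ite_eq i _
  exact h3.unique h4

lemma diag_norm_le {ι : Type*} (e : HilbertBasis ι ℝ H) (T : H →L[ℝ] H) (μ : ι → ℝ)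
    (hT : ∀ k, T (e k) = μ k • e k) {M : ℝ} (hM : 0 ≤ M) (hμ : ∀ k, |μ k| ≤ M) :
    ‖T‖ ≤ M := by
  apply T.opNorm_le_bound hM
  intro x
  have hp : (0:ℝ) < (2 : ENNReal).toReal := by norm_num
  have hTx : ‖T x‖ = ‖e.repr (T x)‖ := (e.repr.norm_map _).symm
  have hx : ‖x‖ = ‖e.repr x‖ := (e.repr.norm_map _).symm
  have key : ‖T x‖ ^ 2 ≤ M ^ 2 * ‖x‖ ^ 2 := by
    have e1 : ‖e.repr (T x)‖ ^ (2 : ENNReal).toReal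
        = ∑' k, ‖e.repr (T x) k‖ ^ (2 : ENNReal).toReal :=
      lp.norm_rpow_eq_tsum hp _
    have e2 : ‖e.repr x‖ ^ (2 : ENNReal).toReal
        = ∑' k, ‖e.repr x k‖ ^ (2 : ENNReal).toReal :=
      lp.norm_rpow_eq_tsum hp _
    have htr : (2 : ENNReal).toReal = (2:ℝ) := by norm_num
    have hsum1 : Summable fun k => ‖e.repr (T x) k‖ ^ (2 : ENNReal).toReal :=
      (lp.memℓp (e.repr (T x))).summable hp
    have hsum2 : Summable fun k => ‖e.repr x k‖ ^ (2 : ENNReal).toReal :=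
      (lp.memℓp (e.repr x)).summable hp
    have hle : ∀ k, ‖e.repr (T x) k‖ ^ (2 : ENNReal).toReal
        ≤ M ^ 2 * ‖e.repr x k‖ ^ (2 : ENNReal).toReal := by
      intro k
      rw [htr, Real.rpow_two, Real.rpow_two, diag_repr e T μ hT x k]
      have h1 : ‖μ k * e.repr x k‖ ≤ M * ‖e.repr x k‖ := by
        rw [norm_mul]
        exact mul_le_mul_of_nonneg_right ((Real.norm_eq_abs _) ▸ hμ k) (norm_nonneg _)
      calc ‖μ k * e.repr x k‖ ^ 2 ≤ (M * ‖e.repr x k‖) ^ 2 := by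
            exact pow_le_pow_left₀ (norm_nonneg _) h1 2
      _ = M ^ 2 * ‖e.repr x k‖ ^ 2 := by ring
    have := Summable.tsum_le_tsum hle hsum1 (hsum2.mul_left (M ^ 2))
    rw [tsum_mul_left] at this
    calc ‖T x‖ ^ 2 = ‖e.repr (T x)‖ ^ (2 : ENNReal).toReal := by
          rw [hTx, htr, Real.rpow_two]
    _ = ∑' k, ‖e.repr (T x) k‖ ^ (2 : ENNReal).toReal := e1
    _ ≤ M ^ 2 * ∑' k, ‖e.repr x k‖ ^ (2 : ENNReal).toReal := this
    _ = M ^ 2 * ‖x‖ ^ 2 := by rw [← e2, hx, htr, Real.rpow_two]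
  calc ‖T x‖ = Real.sqrt (‖T x‖ ^ 2) := by rw [Real.sqrt_sq (norm_nonneg _)]
  _ ≤ Real.sqrt (M ^ 2 * ‖x‖ ^ 2) := Real.sqrt_le_sqrt key
  _ = M * ‖x‖ := by
      rw [← mul_pow, Real.sqrt_sq (by positivity)]

lemma scalar_amgm {x l β : ℝ} (hx : 0 ≤ x) (hl : 0 < l) (hβ0 : 0 < β) (hβ1 : β ≤ 1) :
    l * (x ^ β * (x + l)⁻¹) ≤ l ^ β := by
  have hxl : 0 < x + l := by linarith
  have hlβ : (0:ℝ) ≤ l ^ β := Real.rpow_nonneg hl.le β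
  have amgm : x ^ β * l ^ (1 - β) ≤ β * x + (1 - β) * l :=
    Real.geom_mean_le_arith_mean2_weighted hβ0.le (by linarith) hx hl.le (by ring)
  have hsplit : l ^ (1 - β) * l ^ β = l := by
    rw [← Real.rpow_add hl]; norm_num
  have h1 : l * x ^ β ≤ l ^ β * (x + l) := by
    calc l * x ^ β = (x ^ β * l ^ (1 - β)) * l ^ β := by
          rw [mul_assoc, hsplit]; ring
    _ ≤ (β * x + (1 - β) * l) * l ^ β := mul_le_mul_of_nonneg_right amgm hlβ
    _ ≤ (x + l) * l ^ β := by
        apply mul_le_mul_of_nonneg_right _ hlβ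
        nlinarith
    _ = l ^ β * (x + l) := by ring
  have h2 : l * (x ^ β * (x + l)⁻¹) * (x + l) ≤ l ^ β * (x + l) := by
    calc l * (x ^ β * (x + l)⁻¹) * (x + l) = l * x ^ β * ((x + l)⁻¹ * (x + l)) := by ring
    _ = l * x ^ β := by rw [inv_mul_cancel₀ hxl.ne']; ring
    _ ≤ l ^ β * (x + l) := h1
  exact le_of_mul_le_mul_right h2 hxl

end Aux

set_option maxHeartbeats 1000000 in
/-- Let `H_X`, `H_Z` be separable real Hilbert spaces.  Let `C` be a compact,
positive, self-adjoint bounded operator on `H_X` with orthonormal eigensystem `(ν k, e k)`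
(`e` a Hilbert basis); let `β₂ ∈ (0, 1/2]`, `ζ₂ < ∞`, and `Γ : H_Z →L H_X` with `‖Γ‖ ≤ ζ₂`;
set `E = C^{β₂} ∘ Γ` (with `C^{β₂} = Cβ` the operator with eigenvalues `ν k ^ β₂`) and
`B = C ∘ E`.  Let `Ĉ` be a positive self-adjoint bounded operator on `H_X`, `B̂ : H_Z →L H_X`,
with `‖Ĉ − C‖ ≤ ε₁` and `‖B̂ − B‖ ≤ ε₂`.  Then for every `λ > 0` the estimator
`Ê_λ = (Ĉ + λI)⁻¹ ∘ B̂` satisfies `‖Ê_λ − E‖ ≤ (1/λ)(ε₁‖E‖ + ε₂) + λ^{β₂} ζ₂`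
(operator norms throughout). -/
theorem stmt4
    {HX : Type*} [NormedAddCommGroup HX] [InnerProductSpace ℝ HX] [CompleteSpace HX]
    [TopologicalSpace.SeparableSpace HX]
    {HZ : Type*} [NormedAddCommGroup HZ] [InnerProductSpace ℝ HZ] [CompleteSpace HZ]
    [TopologicalSpace.SeparableSpace HZ]
    (C : HX →L[ℝ] HX) (hC_compact : IsCompactOperator C) (hC_pos : C.IsPositive)
    {ι : Type*} (e : HilbertBasis ι ℝ HX) (ν : ι → ℝ) (hν : ∀ k, 0 ≤ ν k)
    (heig : ∀ k, C (e k) = ν k • e k)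
    (β₂ : ℝ) (hβ : β₂ ∈ Set.Ioc (0 : ℝ) (1 / 2)) (ζ₂ : ℝ)
    (Γ : HZ →L[ℝ] HX) (hΓ : ‖Γ‖ ≤ ζ₂)
    (Cβ : HX →L[ℝ] HX) (hCβ : ∀ k, Cβ (e k) = (ν k ^ β₂) • e k)
    (E : HZ →L[ℝ] HX) (hE : E = Cβ ∘L Γ)
    (B : HZ →L[ℝ] HX) (hB : B = C ∘L E)
    (Chat : HX →L[ℝ] HX) (hChat_pos : Chat.IsPositive)
    (Bhat : HZ →L[ℝ] HX)
    (ε₁ ε₂ : ℝ) (hε₁ : ‖Chat - C‖ ≤ ε₁) (hε₂ : ‖Bhat - B‖ ≤ ε₂)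
    (l : ℝ) (hl : 0 < l) :
    ‖Ring.inverse (Chat + l • (1 : HX →L[ℝ] HX)) ∘L Bhat - E‖ ≤
      (1 / l) * (ε₁ * ‖E‖ + ε₂) + l ^ β₂ * ζ₂ := by
  obtain ⟨hβ0, hβhalf⟩ := hβ
  have hβ1 : β₂ ≤ 1 := hβhalf.trans (by norm_num)
  set A : HX →L[ℝ] HX := C + l • 1 with hA_def
  set Ahat : HX →L[ℝ] HX := Chat + l • 1 with hAhat_def
  have hcoer : ∀ (T : HX →L[ℝ] HX), T.IsPositive →
      ∀ x, l * ‖x‖ ^ 2 ≤ ⟪(T + l • (1 : HX →L[ℝ] HX)) x, x⟫ := by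
    intro T hT x
    have h0 : (0:ℝ) ≤ ⟪T x, x⟫ := by simpa using hT.inner_nonneg_left x
    have hexp : ⟪(T + l • (1 : HX →L[ℝ] HX)) x, x⟫ = ⟪T x, x⟫ + l * ‖x‖ ^ 2 := by
      simp [inner_add_left, real_inner_smul_left, real_inner_self_eq_norm_sq]
    rw [hexp]; linarith
  have hcoA := hcoer C hC_pos
  have hcoAhat := hcoer Chat hChat_pos
  have huA : IsUnit A := coercive_isUnit A hl hcoA
  have huAhat : IsUnit Ahat := coercive_isUnit Ahat hl hcoAhat
  set D := Ring.inverse A with hD_def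
  set R := Ring.inverse Ahat with hR_def
  have hR_norm : ‖R‖ ≤ 1 / l := coercive_inv_bound Ahat hl hcoAhat huAhat
  have hAD : ∀ y, A (D y) = y := by
    intro y
    have h := Ring.mul_inverse_cancel A huA
    calc A (D y) = (A * Ring.inverse A) y := rfl
    _ = y := by rw [h, one_def, id_apply]
  have hDA : ∀ y, D (A y) = y := by
    intro y
    have h := Ring.inverse_mul_cancel A huA
    calc D (A y) = (Ring.inverse A * A) y := rfl
    _ = y := by rw [h, one_def, id_apply]
  have hAhatR : ∀ y, Ahat (R y) = y := by
    intro y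
    have h := Ring.mul_inverse_cancel Ahat huAhat
    calc Ahat (R y) = (Ahat * Ring.inverse Ahat) y := rfl
    _ = y := by rw [h, one_def, id_apply]
  have hRAhat : ∀ y, R (Ahat y) = y := by
    intro y
    have h := Ring.inverse_mul_cancel Ahat huAhat
    calc R (Ahat y) = (Ring.inverse Ahat * Ahat) y := rfl
    _ = y := by rw [h, one_def, id_apply]
  have hνl : ∀ k, 0 < ν k + l := fun k => by have := hν k; linarith
  have hAe : ∀ k, A (e k) = (ν k + l) • e k := by
    intro k
    simp [hA_def, heig k, add_smul, add_apply, smul_apply, one_apply]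
  have hDe : ∀ k, D (e k) = (ν k + l)⁻¹ • e k := by
    intro k
    have h1 : D ((ν k + l) • e k) = e k := by rw [← hAe k]; exact hDA _
    rw [map_smul] at h1
    have h2 : (ν k + l)⁻¹ • ((ν k + l) • D (e k)) = (ν k + l)⁻¹ • e k :=
      congrArg (fun v => (ν k + l)⁻¹ • v) h1
    rwa [smul_smul, inv_mul_cancel₀ (hνl k).ne', one_smul] at h2
  -- norm bounds for the diagonal operators
  have hDC_norm : ‖D ∘L C‖ ≤ 1 := by
    apply diag_norm_le e _ (fun k => ν k * (ν k + l)⁻¹) _ zero_le_one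
    · intro k
      have h1 : 0 ≤ ν k * (ν k + l)⁻¹ := mul_nonneg (hν k) (inv_nonneg.mpr (hνl k).le)
      rw [abs_of_nonneg h1]
      rw [mul_inv_le_iff₀ (hνl k)]
      linarith [hν k]
    · intro k
      rw [comp_apply, heig k, map_smul, hDe k, smul_smul]
  have hlDCβ_norm : ‖l • (D ∘L Cβ)‖ ≤ l ^ β₂ := by
    apply diag_norm_le e _ (fun k => l * ((ν k) ^ β₂ * (ν k + l)⁻¹)) _
      (Real.rpow_nonneg hl.le _)
    · intro k
      have h1 : (0:ℝ) ≤ l * ((ν k) ^ β₂ * (ν k + l)⁻¹) :=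
        mul_nonneg hl.le (mul_nonneg (Real.rpow_nonneg (hν k) β₂) (inv_nonneg.mpr (hνl k).le))
      rw [abs_of_nonneg h1]
      exact scalar_amgm (hν k) hl hβ0 hβ1
    · intro k
      rw [smul_apply, comp_apply, hCβ k, map_smul, hDe k, smul_smul, smul_smul, mul_assoc]
  -- commutation
  have hCA : ∀ y, C (A y) = A (C y) := by
    intro y
    simp [hA_def, add_apply, smul_apply, one_apply, map_add, map_smul]
  have hDCcomm : ∀ y, D (C y) = C (D y) := by
    intro y
    conv_lhs => rw [← hAD y]
    rw [hCA (D y), hDA]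
  -- the key operator identity
  have key : R ∘L Bhat - E
      = R ∘L (Bhat - B) + R ∘L ((C - Chat) ∘L ((D ∘L C) ∘L E)) - l • (D ∘L E) := by
    ext z
    have hinj : Function.Injective (⇑Ahat) := by
      intro a b h
      have := congrArg R h
      rwa [hRAhat, hRAhat] at this
    apply hinj
    simp only [ContinuousLinearMap.comp_apply, sub_apply, add_apply,
      ContinuousLinearMap.smul_apply, map_sub, map_add, map_smul, hAhatR]
    set w := E z with hw
    set u := D w with hu
    have huw : C u + l • u = w := by
      have h := hAD w
      rw [hA_def] at h
      simpa [add_apply, smul_apply, one_apply] using h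
    have hDCw : D (C w) = C u := hDCcomm w
    have hBz : B z = C w := by rw [hB]; rfl
    rw [hBz, hDCw]
    have hAhat_app : ∀ v, Ahat v = Chat v + l • v := by
      intro v
      rw [hAhat_def]
      simp [add_apply, smul_apply, one_apply]
    rw [hAhat_app, hAhat_app, ← huw]
    simp only [map_add, map_smul, sub_apply]
    module
  -- assembling the norm bound
  have hε₁' : (0:ℝ) ≤ ε₁ := le_trans (norm_nonneg _) hε₁
  have hε₂' : (0:ℝ) ≤ ε₂ := le_trans (norm_nonneg _) hε₂
  have hζ' : (0:ℝ) ≤ ζ₂ := le_trans (norm_nonneg _) hΓ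
  have hlinv : (0:ℝ) ≤ 1 / l := by positivity
  have hCC : ‖C - Chat‖ ≤ ε₁ := by rw [norm_sub_rev]; exact hε₁
  have t1 : ‖R ∘L (Bhat - B)‖ ≤ (1 / l) * ε₂ :=
    le_trans (opNorm_comp_le _ _) (mul_le_mul hR_norm hε₂ (norm_nonneg _) hlinv)
  have hDCE : ‖(D ∘L C) ∘L E‖ ≤ ‖E‖ := by
    refine le_trans (opNorm_comp_le _ _) ?_
    calc ‖D ∘L C‖ * ‖E‖ ≤ 1 * ‖E‖ := mul_le_mul_of_nonneg_right hDC_norm (norm_nonneg E)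
    _ = ‖E‖ := one_mul _
  have t2 : ‖R ∘L ((C - Chat) ∘L ((D ∘L C) ∘L E))‖ ≤ (1 / l) * (ε₁ * ‖E‖) := by
    refine le_trans (opNorm_comp_le _ _) ?_
    have h2 : ‖(C - Chat) ∘L ((D ∘L C) ∘L E)‖ ≤ ε₁ * ‖E‖ :=
      le_trans (opNorm_comp_le _ _) (mul_le_mul hCC hDCE (norm_nonneg _) hε₁')
    exact mul_le_mul hR_norm h2 (norm_nonneg _) hlinv
  have t3 : ‖l • (D ∘L E)‖ ≤ l ^ β₂ * ζ₂ := by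
    have heq : l • (D ∘L E) = (l • (D ∘L Cβ)) ∘L Γ := by
      rw [hE]; ext z
      simp [comp_apply, smul_apply]
    rw [heq]
    exact le_trans (opNorm_comp_le _ _)
      (mul_le_mul hlDCβ_norm hΓ (norm_nonneg _) (Real.rpow_nonneg hl.le _))
  calc ‖R ∘L Bhat - E‖
      = ‖R ∘L (Bhat - B) + R ∘L ((C - Chat) ∘L ((D ∘L C) ∘L E)) - l • (D ∘L E)‖ := by rw [key]
  _ ≤ ‖R ∘L (Bhat - B) + R ∘L ((C - Chat) ∘L ((D ∘L C) ∘L E))‖ + ‖l • (D ∘L E)‖ :=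
      norm_sub_le _ _
  _ ≤ (‖R ∘L (Bhat - B)‖ + ‖R ∘L ((C - Chat) ∘L ((D ∘L C) ∘L E))‖) + ‖l • (D ∘L E)‖ := by
      gcongr
      exact norm_add_le _ _
  _ ≤ ((1 / l) * ε₂ + (1 / l) * (ε₁ * ‖E‖)) + l ^ β₂ * ζ₂ := by
      gcongr
  _ = (1 / l) * (ε₁ * ‖E‖ + ε₂) + l ^ β₂ * ζ₂ := by ring
end

section
/- Let n, d, m ∈ ℕ, let Ψ ∈ ℝ^{d×n} and Φ ∈ ℝ^{m×n} be matrices, let D ∈ ℝ^{n×n} be a diagonal matrix with nonnegative diagonal entries, and let λ > 0. Then the minimum over E ∈ ℝ^{d×m} of L(E) = tr((Φ − EᵀΨ) D (Φ − EᵀΨ)ᵀ) + λ ‖E‖_F² equals tr(G (D − D Ψᵀ (Ψ D Ψᵀ + λ I)⁻¹ Ψ D)), where G = Φᵀ Φ ∈ ℝ^{n×n}. Equivalently, L(Ê) = tr(G(D − DΨᵀ(ΨDΨᵀ + λI)⁻¹ΨD)) for Ê = (ΨDΨᵀ + λI)⁻¹ΨDΦᵀ. -/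
open Matrix

attribute [local instance] Matrix.frobeniusNormedAddCommGroup

/-- Let `Ψ ∈ ℝ^{d×n}`, `Φ ∈ ℝ^{m×n}`, `D ∈ ℝ^{n×n}` diagonal with
nonnegative diagonal entries, and `λ > 0`.  Then the minimum over `E ∈ ℝ^{d×m}` of
`L(E) = tr((Φ − EᵀΨ) D (Φ − EᵀΨ)ᵀ) + λ ‖E‖_F²` equals
`tr(G (D − D Ψᵀ (Ψ D Ψᵀ + λ I)⁻¹ Ψ D))` where `G = ΦᵀΦ`; equivalently, this value is
`L(Ê)` for `Ê = (Ψ D Ψᵀ + λI)⁻¹ Ψ D Φᵀ`, which minimizes `L`.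
(`‖·‖` is the Frobenius norm, enabled by the local instance above.) -/
theorem stmt14
    (n d m : ℕ)
    (Ψ : Matrix (Fin d) (Fin n) ℝ) (Φ : Matrix (Fin m) (Fin n) ℝ)
    (w : Fin n → ℝ) (hw : ∀ i, 0 ≤ w i)
    (D : Matrix (Fin n) (Fin n) ℝ) (hD : D = Matrix.diagonal w)
    (l : ℝ) (hl : 0 < l)
    (L : Matrix (Fin d) (Fin m) ℝ → ℝ)
    (hL : ∀ E, L E = ((Φ - Eᵀ * Ψ) * D * (Φ - Eᵀ * Ψ)ᵀ).trace + l * ‖E‖ ^ 2)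
    (G : Matrix (Fin n) (Fin n) ℝ) (hG : G = Φᵀ * Φ)
    (Ehat : Matrix (Fin d) (Fin m) ℝ)
    (hEhat : Ehat = (Ψ * D * Ψᵀ + l • (1 : Matrix (Fin d) (Fin d) ℝ))⁻¹ * Ψ * D * Φᵀ) :
    L Ehat = (G * (D - D * Ψᵀ *
        (Ψ * D * Ψᵀ + l • (1 : Matrix (Fin d) (Fin d) ℝ))⁻¹ * Ψ * D)).trace ∧
      ∀ E, L Ehat ≤ L E := by
  set A : Matrix (Fin d) (Fin d) ℝ := Ψ * D * Ψᵀ + l • (1 : Matrix (Fin d) (Fin d) ℝ) with hA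
  -- basic facts about D
  have hDt : Dᵀ = D := by rw [hD]; exact Matrix.diagonal_transpose w
  have hDpsd : D.PosSemidef := hD ▸ posSemidef_diagonal_iff.mpr hw
  have hPsd : (Ψ * D * Ψᵀ).PosSemidef := by
    simpa [conjTranspose_eq_transpose_of_trivial] using hDpsd.mul_mul_conjTranspose_same Ψ
  have hlI : (l • (1 : Matrix (Fin d) (Fin d) ℝ)).PosDef := by
    refine posDef_iff_dotProduct_mulVec.mpr ⟨?_, fun x hx => ?_⟩
    · simp [Matrix.IsHermitian, conjTranspose_eq_transpose_of_trivial]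
    · simp only [smul_mulVec, one_mulVec, dotProduct_smul]
      have : (0:ℝ) < star x ⬝ᵥ x := by
        simpa using dotProduct_star_self_pos_iff.mpr hx
      positivity
  have hApd : A.PosDef := Matrix.PosDef.posSemidef_add hPsd hlI
  have hAt : Aᵀ = A := by
    have h := hApd.isHermitian
    rwa [Matrix.IsHermitian, conjTranspose_eq_transpose_of_trivial] at h
  have hdet : IsUnit A.det := hApd.det_pos.ne'.isUnit
  have hAE : A * Ehat = Ψ * D * Φᵀ := by
    rw [hEhat, ← Matrix.mul_assoc, ← Matrix.mul_assoc, ← Matrix.mul_assoc,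
      Matrix.mul_nonsing_inv _ hdet, Matrix.one_mul]
  -- Frobenius norm squared equals trace of EᵀE
  have hnorm : ∀ E : Matrix (Fin d) (Fin m) ℝ, ‖E‖ ^ 2 = (Eᵀ * E).trace := by
    intro E
    rw [frobenius_norm_def]
    have h0 : (0:ℝ) ≤ ∑ i, ∑ j, ‖E i j‖ ^ (2:ℝ) := by positivity
    rw [← Real.rpow_natCast (_ ^ (1/2:ℝ)) 2, ← Real.rpow_mul h0]
    norm_num
    simp [Matrix.trace, Matrix.diag, Matrix.mul_apply, Real.rpow_two, sq_abs]
    rw [Finset.sum_comm]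
    simp [sq]
  -- symmetric-sandwich trace symmetry
  have hcross : ∀ (X Y : Matrix (Fin d) (Fin m) ℝ),
      (Xᵀ * (A * Y)).trace = (Yᵀ * (A * X)).trace := by
    intro X Y
    rw [← Matrix.trace_transpose (Xᵀ * (A * Y))]
    simp [Matrix.transpose_mul, hAt, Matrix.mul_assoc]
  -- nonnegativity of sandwich traces
  have hsand : ∀ X : Matrix (Fin d) (Fin m) ℝ, 0 ≤ (Xᵀ * (A * X)).trace := by
    intro X
    rw [Matrix.trace]
    apply Finset.sum_nonneg
    intro j _
    have h := hApd.posSemidef.dotProduct_mulVec_nonneg (fun i => X i j)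
    simp only [star_trivial] at h
    convert h using 1
    simp only [Matrix.diag, Matrix.mul_apply, transpose_apply, dotProduct, mulVec]
  -- expansion of L
  have e1 : ∀ E, L E = (Φ * (D * Φᵀ)).trace - 2 * (Eᵀ * (Ψ * (D * Φᵀ))).trace
      + (Eᵀ * (A * E)).trace := by
    intro E
    have hc : (Φ * (D * (Ψᵀ * E))).trace = (Eᵀ * (Ψ * (D * Φᵀ))).trace := by
      rw [← Matrix.trace_transpose (Φ * (D * (Ψᵀ * E)))]
      simp [Matrix.transpose_mul, hDt, Matrix.mul_assoc]
    rw [hL, hnorm, hA]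
    simp only [Matrix.sub_mul, Matrix.mul_sub, Matrix.transpose_sub, Matrix.transpose_mul,
      Matrix.trace_sub, Matrix.transpose_transpose, Matrix.add_mul, Matrix.mul_add,
      Matrix.trace_add, Matrix.smul_mul, Matrix.mul_smul, Matrix.one_mul, Matrix.trace_smul, Matrix.mul_assoc,
      smul_eq_mul]
    have hsm : (Eᵀ * (l • (1 : Matrix (Fin d) (Fin d) ℝ) * E)).trace = l * (Eᵀ * E).trace := by
      rw [Matrix.smul_mul, Matrix.one_mul, Matrix.mul_smul, Matrix.trace_smul, smul_eq_mul]
    linarith [hc, hsm]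
  have e2 : ∀ E, L E = L Ehat + ((E - Ehat)ᵀ * (A * (E - Ehat))).trace := by
    intro E
    have hBE : ∀ X : Matrix (Fin d) (Fin m) ℝ,
        (Xᵀ * (A * Ehat)).trace = (Xᵀ * (Ψ * (D * Φᵀ))).trace := by
      intro X; rw [hAE, Matrix.mul_assoc]
    have expand : ((E - Ehat)ᵀ * (A * (E - Ehat))).trace
        = (Eᵀ * (A * E)).trace - 2 * (Eᵀ * (Ψ * (D * Φᵀ))).trace
          + (Ehatᵀ * (Ψ * (D * Φᵀ))).trace := by
      simp only [Matrix.transpose_sub, Matrix.sub_mul, Matrix.mul_sub, Matrix.trace_sub]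
      have h1 := hBE E
      have h2 := hBE Ehat
      have h3 := hcross Ehat E
      linarith
    have hAhat : (Ehatᵀ * (A * Ehat)).trace = (Ehatᵀ * (Ψ * (D * Φᵀ))).trace := hBE Ehat
    rw [e1 E, e1 Ehat, expand, hAhat]
    ring
  constructor
  · -- value at Ehat
    have hEt : Ehatᵀ = Φ * (D * (Ψᵀ * A⁻¹)) := by
      rw [hEhat]
      simp only [Matrix.transpose_mul, Matrix.transpose_transpose, hDt,
        Matrix.transpose_nonsing_inv, hAt, Matrix.mul_assoc]
    have hval : L Ehat = (Φ * (D * Φᵀ)).trace - (Ehatᵀ * (Ψ * (D * Φᵀ))).trace := by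
      have := e1 Ehat
      have hAhat : (Ehatᵀ * (A * Ehat)).trace = (Ehatᵀ * (Ψ * (D * Φᵀ))).trace := by
        rw [hAE, Matrix.mul_assoc]
      linarith
    rw [hval, hG, hEt]
    rw [Matrix.mul_sub, Matrix.trace_sub]
    congr 1
    · rw [Matrix.mul_assoc, Matrix.trace_mul_comm (Φᵀ) (Φ * D), Matrix.mul_assoc]
    · simp only [Matrix.mul_assoc]
      rw [Matrix.trace_mul_comm Φᵀ]
      simp only [Matrix.mul_assoc]
  · intro E
    have := hsand (E - Ehat)
    have h2 := e2 E
    linarith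
end
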